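/- (Lemma 1, necessity.) Let r₁, r₂, r₃, r₄ be a solution of the four-body system in the center-of-mass frame such that r₂(t) = r₁(t + τ) for all t ∈ ℝ, where τ = π/(2ω). Then the initial data satisfy mω r₂₄(0) = p₁₃(0) and p₂₄(0) = −mω r₁₃(0). -/

import Mathlib

noncomputable section

/-- The Euclidean plane. -/
abbrev Plane : Type := EuclideanSpace ℝ (Fin 2)

/-- A solution of the planar four-body system with pairwise quadratic potential
`V = (mω²/4)(2‖r₁−r₂‖² + 2‖r₂−r₃‖² + 2‖r₃−r₄‖² + 2‖r₁−r₄‖² − ‖r₁−r₃‖² − ‖r₂−r₄‖²)`: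
four twice differentiable curves satisfying Newton's equations
`rᵢ'' = −ω²((rᵢ − r_{i+1}) + (rᵢ − r_{i−1}) − ½(rᵢ − r_{i+2}))` (indices mod 4). -/
def IsFourBodySolution (ω : ℝ) (r₁ r₂ r₃ r₄ : ℝ → Plane) : Prop :=
  (Differentiable ℝ r₁ ∧ Differentiable ℝ (deriv r₁)) ∧
  (Differentiable ℝ r₂ ∧ Differentiable ℝ (deriv r₂)) ∧
  (Differentiable ℝ r₃ ∧ Differentiable ℝ (deriv r₃)) ∧
  (Differentiable ℝ r₄ ∧ Differentiable ℝ (deriv r₄)) ∧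
  (∀ t : ℝ, deriv (deriv r₁) t =
    (-(ω ^ 2)) • ((r₁ t - r₂ t) + (r₁ t - r₄ t) - (1 / 2 : ℝ) • (r₁ t - r₃ t))) ∧
  (∀ t : ℝ, deriv (deriv r₂) t =
    (-(ω ^ 2)) • ((r₂ t - r₃ t) + (r₂ t - r₁ t) - (1 / 2 : ℝ) • (r₂ t - r₄ t))) ∧
  (∀ t : ℝ, deriv (deriv r₃) t =
    (-(ω ^ 2)) • ((r₃ t - r₄ t) + (r₃ t - r₂ t) - (1 / 2 : ℝ) • (r₃ t - r₁ t))) ∧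
  (∀ t : ℝ, deriv (deriv r₄) t =
    (-(ω ^ 2)) • ((r₄ t - r₁ t) + (r₄ t - r₃ t) - (1 / 2 : ℝ) • (r₄ t - r₂ t)))

/-- **Lemma 1, necessity.** If a center-of-mass-frame solution satisfies
`r₂(t) = r₁(t + τ)` for all `t`, with `τ = π/(2ω)`, then the initial data satisfy
`mω r₂₄(0) = p₁₃(0)` and `p₂₄(0) = −mω r₁₃(0)`. -/
theorem choreography_necessity (m ω : ℝ) (hm : 0 < m) (hω : 0 < ω)
    (r₁ r₂ r₃ r₄ : ℝ → Plane)
    (hsol : IsFourBodySolution ω r₁ r₂ r₃ r₄)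
    (hcomr : r₁ 0 + r₂ 0 + r₃ 0 + r₄ 0 = 0)
    (hcomp : m • deriv r₁ 0 + m • deriv r₂ 0 + m • deriv r₃ 0 + m • deriv r₄ 0 = 0)
    (hchor : ∀ t : ℝ, r₂ t = r₁ (t + Real.pi / (2 * ω))) :
    (m * ω) • (r₂ 0 - r₄ 0) = m • deriv r₁ 0 - m • deriv r₃ 0
    ∧ m • deriv r₂ 0 - m • deriv r₄ 0 = (-(m * ω)) • (r₁ 0 - r₃ 0) := by
  obtain ⟨⟨h1d, h1d'⟩, ⟨h2d, h2d'⟩, ⟨h3d, h3d'⟩, ⟨h4d, h4d'⟩, e1, e2, e3, e4⟩ := hsol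
  set τ : ℝ := Real.pi / (2 * ω) with hτ
  have hωne : ω ≠ 0 := ne_of_gt hω
  have hmne : m ≠ 0 := ne_of_gt hm
  -- the center of mass stays at the origin
  set s : ℝ → Plane := fun t => r₁ t + r₂ t + r₃ t + r₄ t with hs_def
  have hds : deriv s = fun t => deriv r₁ t + deriv r₂ t + deriv r₃ t + deriv r₄ t := by
    funext t
    exact ((((h1d t).hasDerivAt.add (h2d t).hasDerivAt).add
      (h3d t).hasDerivAt).add (h4d t).hasDerivAt).deriv
  have hdds : ∀ t, deriv (deriv s) t = 0 := by
    intro t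
    rw [hds]
    have h := ((((h1d' t).hasDerivAt.add (h2d' t).hasDerivAt).add
      (h3d' t).hasDerivAt).add (h4d' t).hasDerivAt).deriv
    rw [show (fun t => deriv r₁ t + deriv r₂ t + deriv r₃ t + deriv r₄ t) =
      deriv r₁ + deriv r₂ + deriv r₃ + deriv r₄ from rfl, h, e1 t, e2 t, e3 t, e4 t]
    module
  have hds' : Differentiable ℝ (deriv s) := by
    rw [hds]; exact ((h1d'.add h2d').add h3d').add h4d'
  have hs'0 : deriv s 0 = 0 := by
    rw [hds]
    have hsum := hcomp
    rw [← smul_add, ← smul_add, ← smul_add] at hsum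
    exact (smul_eq_zero.mp hsum).resolve_left hmne
  have hs' : ∀ t, deriv s t = 0 := fun t => by
    have := is_const_of_deriv_eq_zero hds' hdds t 0
    rw [this, hs'0]
  have hsdiff : Differentiable ℝ s := fun t =>
    ((((h1d t).add (h2d t)).add (h3d t)).add (h4d t))
  have hs0 : ∀ t, r₁ t + r₂ t + r₃ t + r₄ t = 0 := fun t => by
    have h := is_const_of_deriv_eq_zero hsdiff hs' t 0
    have h0 : s 0 = 0 := hcomr
    calc r₁ t + r₂ t + r₃ t + r₄ t = s t := rfl
    _ = s 0 := h
    _ = 0 := h0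
  -- shifting identities
  have hr2 : r₂ = fun t => r₁ (t + τ) := funext hchor
  have hshift2 : ∀ t, deriv r₂ t = deriv r₁ (t + τ) := by
    intro t; rw [hr2]; exact deriv_comp_add_const r₁ τ t
  have hshift2' : ∀ t, deriv (deriv r₂) t = deriv (deriv r₁) (t + τ) := by
    intro t
    have : deriv r₂ = fun t => deriv r₁ (t + τ) := funext hshift2
    rw [this]; exact deriv_comp_add_const (deriv r₁) τ t
  -- r₄ is r₃ shifted by τ
  have h34 : ∀ t, r₃ (t + τ) = r₄ t := by
    intro t
    have h := hshift2' t
    rw [e2 t, e1 (t + τ)] at h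
    have h' := smul_right_injective Plane
      (neg_ne_zero.mpr (pow_ne_zero 2 hωne)) h
    have hst := hs0 t
    have hstτ := hs0 (t + τ)
    have hc := hchor t
    linear_combination (norm := module) (-(2/3) : ℝ) • h' + (-(2/3) : ℝ) • hst +
      ((2/3) : ℝ) • hstτ + ((5/3) : ℝ) • hc
  -- u = r₁ - r₃ satisfies u'' = -ω² u
  set u : ℝ → Plane := fun t => r₁ t - r₃ t with hu_def
  set u' : ℝ → Plane := fun t => deriv r₁ t - deriv r₃ t with hu'_def
  have hu' : ∀ t, HasDerivAt u (u' t) t := fun t =>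
    (h1d t).hasDerivAt.sub (h3d t).hasDerivAt
  have hu'' : ∀ t, HasDerivAt u' ((-(ω ^ 2)) • u t) t := by
    intro t
    have h := (h1d' t).hasDerivAt.sub (h3d' t).hasDerivAt
    have heq : deriv (deriv r₁) t - deriv (deriv r₃) t = (-(ω ^ 2)) • u t := by
      rw [e1 t, e3 t]; show _ = (-(ω ^ 2)) • (r₁ t - r₃ t); module
    rwa [heq] at h
  -- conserved quantities A and B
  have hA : ∀ a b : ℝ,
      ω • (Real.cos (ω * a) • u a) - Real.sin (ω * a) • u' a
        = ω • (Real.cos (ω * b) • u b) - Real.sin (ω * b) • u' b := by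
    apply is_const_of_deriv_eq_zero
    · intro t
      have hcos : HasDerivAt (fun t => Real.cos (ω * t)) (-Real.sin (ω * t) * (ω * 1)) t :=
        (Real.hasDerivAt_cos (ω * t)).comp t ((hasDerivAt_id t).const_mul ω)
      have hsin : HasDerivAt (fun t => Real.sin (ω * t)) (Real.cos (ω * t) * (ω * 1)) t :=
        (Real.hasDerivAt_sin (ω * t)).comp t ((hasDerivAt_id t).const_mul ω)
      exact (((hcos.smul (hu' t)).const_smul ω).sub (hsin.smul (hu'' t))).differentiableAt
    · intro t
      have hcos : HasDerivAt (fun t => Real.cos (ω * t)) (-Real.sin (ω * t) * (ω * 1)) t :=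
        (Real.hasDerivAt_cos (ω * t)).comp t ((hasDerivAt_id t).const_mul ω)
      have hsin : HasDerivAt (fun t => Real.sin (ω * t)) (Real.cos (ω * t) * (ω * 1)) t :=
        (Real.hasDerivAt_sin (ω * t)).comp t ((hasDerivAt_id t).const_mul ω)
      have h := ((hcos.smul (hu' t)).const_smul ω).sub (hsin.smul (hu'' t))
      have hz : ω • (Real.cos (ω * t) • u' t + (-Real.sin (ω * t) * (ω * 1)) • u t)
          - (Real.sin (ω * t) • ((-(ω ^ 2)) • u t) + (Real.cos (ω * t) * (ω * 1)) • u' t)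
          = (0 : Plane) := by module
      rw [hz] at h
      exact h.deriv
  have hB : ∀ a b : ℝ,
      ω • (Real.sin (ω * a) • u a) + Real.cos (ω * a) • u' a
        = ω • (Real.sin (ω * b) • u b) + Real.cos (ω * b) • u' b := by
    apply is_const_of_deriv_eq_zero
    · intro t
      have hcos : HasDerivAt (fun t => Real.cos (ω * t)) (-Real.sin (ω * t) * (ω * 1)) t :=
        (Real.hasDerivAt_cos (ω * t)).comp t ((hasDerivAt_id t).const_mul ω)
      have hsin : HasDerivAt (fun t => Real.sin (ω * t)) (Real.cos (ω * t) * (ω * 1)) t :=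
        (Real.hasDerivAt_sin (ω * t)).comp t ((hasDerivAt_id t).const_mul ω)
      exact (((hsin.smul (hu' t)).const_smul ω).add (hcos.smul (hu'' t))).differentiableAt
    · intro t
      have hcos : HasDerivAt (fun t => Real.cos (ω * t)) (-Real.sin (ω * t) * (ω * 1)) t :=
        (Real.hasDerivAt_cos (ω * t)).comp t ((hasDerivAt_id t).const_mul ω)
      have hsin : HasDerivAt (fun t => Real.sin (ω * t)) (Real.cos (ω * t) * (ω * 1)) t :=
        (Real.hasDerivAt_sin (ω * t)).comp t ((hasDerivAt_id t).const_mul ω)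
      have h := ((hsin.smul (hu' t)).const_smul ω).add (hcos.smul (hu'' t))
      have hz : ω • (Real.sin (ω * t) • u' t + (Real.cos (ω * t) * (ω * 1)) • u t)
          + (Real.cos (ω * t) • ((-(ω ^ 2)) • u t) + (-Real.sin (ω * t) * (ω * 1)) • u' t)
          = (0 : Plane) := by module
      rw [hz] at h
      exact h.deriv
  -- evaluate at 0 and τ
  have hωτ : ω * τ = Real.pi / 2 := by
    rw [hτ]; field_simp
  have hA0 : ω • (Real.cos (ω * 0) • u 0) - Real.sin (ω * 0) • u' 0 = ω • u 0 := by
    simp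
  have hAτ : ω • (Real.cos (ω * τ) • u τ) - Real.sin (ω * τ) • u' τ = -u' τ := by
    rw [hωτ, Real.cos_pi_div_two, Real.sin_pi_div_two]; simp
  have hB0 : ω • (Real.sin (ω * 0) • u 0) + Real.cos (ω * 0) • u' 0 = u' 0 := by
    simp
  have hBτ : ω • (Real.sin (ω * τ) • u τ) + Real.cos (ω * τ) • u' τ = ω • u τ := by
    rw [hωτ, Real.cos_pi_div_two, Real.sin_pi_div_two]; simp
  have key1 : ω • u τ = u' 0 := by
    have := hB τ 0; rw [hBτ, hB0] at this; exact this
  have key2 : u' τ = -(ω • u 0) := by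
    have := hA τ 0; rw [hAτ, hA0] at this
    rw [← this]; simp
  -- relate initial data of v = r₂ - r₄ to u at τ
  have hv0 : r₂ 0 - r₄ 0 = u τ := by
    rw [hchor 0, ← h34 0, hu_def]
    simp
  have hdv0 : deriv r₂ 0 - deriv r₄ 0 = u' τ := by
    have hr4 : r₄ = fun t => r₃ (t + τ) := by
      funext t; exact (h34 t).symm
    have hshift4 : deriv r₄ 0 = deriv r₃ (0 + τ) := by
      rw [hr4]; exact deriv_comp_add_const r₃ τ 0
    rw [hshift2 0, hshift4, hu'_def]
    simp
  constructor
  · rw [hv0]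
    have : m • deriv r₁ 0 - m • deriv r₃ 0 = m • u' 0 := by rw [hu'_def]; module
    rw [this, ← key1, smul_smul]
  · have h : m • deriv r₂ 0 - m • deriv r₄ 0 = m • u' τ := by
      rw [← hdv0]; module
    rw [h, key2]
    have h2 : u 0 = r₁ 0 - r₃ 0 := rfl
    rw [← h2]
    module
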